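/- Let (B, μ, η, δ, ε) be a weak bimonoid in a braided monoidal category (M, ⊗, K, c) and define the target maps t := (B ⊗ ε) ∘ (B ⊗ μ) ∘ (c_{B,B} ⊗ B) ∘ (B ⊗ δ) ∘ (B ⊗ η) and r := (ε ⊗ B) ∘ (μ ⊗ B) ∘ (B ⊗ c_{B,B}) ∘ (δ ⊗ B) ∘ (η ⊗ B) : B → B. Then r ∗ id_B = id_B, where ∗ is the convolution product f ∗ g := μ ∘ (f ⊗ g) ∘ δ. -/

import Mathlib

open CategoryTheory MonoidalCategory

set_option maxHeartbeats 1000000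

variable {M : Type*} [Category M] [MonoidalCategory M] [BraidedCategory M]

/-- A weak bimonoid in a braided monoidal category, in the sense of Pastro–Street:
a monoid and comonoid structure on the same object satisfying the multiplicativity
axiom (b) and the weak unit and counit axioms (w) and (v). -/
structure WeakBimon (M : Type*) [Category M] [MonoidalCategory M] [BraidedCategory M] where
  B : M
  mul : B ⊗ B ⟶ B
  one : 𝟙_ M ⟶ B
  comul : B ⟶ B ⊗ B
  counit : B ⟶ 𝟙_ M
  mul_assoc : (mul ⊗ₘ 𝟙 B) ≫ mul = (α_ B B B).hom ≫ (𝟙 B ⊗ₘ mul) ≫ mul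
  one_mul : (one ⊗ₘ 𝟙 B) ≫ mul = (λ_ B).hom
  mul_one : (𝟙 B ⊗ₘ one) ≫ mul = (ρ_ B).hom
  comul_coassoc : comul ≫ (comul ⊗ₘ 𝟙 B) ≫ (α_ B B B).hom = comul ≫ (𝟙 B ⊗ₘ comul)
  comul_counit_left : comul ≫ (counit ⊗ₘ 𝟙 B) = (λ_ B).inv
  comul_counit_right : comul ≫ (𝟙 B ⊗ₘ counit) = (ρ_ B).inv
  compat : mul ≫ comul =
    (comul ⊗ₘ comul) ≫ (α_ B B (B ⊗ B)).hom ≫ (𝟙 B ⊗ₘ (α_ B B B).inv) ≫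
      (𝟙 B ⊗ₘ ((β_ B B).hom ⊗ₘ 𝟙 B)) ≫ (𝟙 B ⊗ₘ (α_ B B B).hom) ≫ (α_ B B (B ⊗ B)).inv ≫
      (mul ⊗ₘ mul)
  weak_unit : one ≫ comul ≫ (comul ⊗ₘ 𝟙 B) =
    (λ_ (𝟙_ M)).inv ≫ (one ⊗ₘ one) ≫ (comul ⊗ₘ comul) ≫ (α_ B B (B ⊗ B)).hom ≫
      (𝟙 B ⊗ₘ (α_ B B B).inv) ≫ (𝟙 B ⊗ₘ (mul ⊗ₘ 𝟙 B)) ≫ (α_ B B B).inv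
  weak_unit' : one ≫ comul ≫ (comul ⊗ₘ 𝟙 B) =
    (λ_ (𝟙_ M)).inv ≫ (one ⊗ₘ one) ≫ (comul ⊗ₘ comul) ≫ (α_ B B (B ⊗ B)).hom ≫
      (𝟙 B ⊗ₘ (α_ B B B).inv) ≫ (𝟙 B ⊗ₘ ((β_ B B).inv ⊗ₘ 𝟙 B)) ≫ (𝟙 B ⊗ₘ (mul ⊗ₘ 𝟙 B)) ≫
      (α_ B B B).inv
  weak_counit : (mul ⊗ₘ 𝟙 B) ≫ mul ≫ counit =
    (α_ B B B).hom ≫ (𝟙 B ⊗ₘ (comul ⊗ₘ 𝟙 B)) ≫ (𝟙 B ⊗ₘ (α_ B B B).hom) ≫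
      (α_ B B (B ⊗ B)).inv ≫ (mul ⊗ₘ mul) ≫ (counit ⊗ₘ counit) ≫ (λ_ (𝟙_ M)).hom
  weak_counit' : (mul ⊗ₘ 𝟙 B) ≫ mul ≫ counit =
    (α_ B B B).hom ≫ (𝟙 B ⊗ₘ ((comul ≫ (β_ B B).inv) ⊗ₘ 𝟙 B)) ≫ (𝟙 B ⊗ₘ (α_ B B B).hom) ≫
      (α_ B B (B ⊗ B)).inv ≫ (mul ⊗ₘ mul) ≫ (counit ⊗ₘ counit) ≫ (λ_ (𝟙_ M)).hom

/-- The opmonoidal structure `τ_{X,Y} = (X ⊗ c_{Y,B} ⊗ B) ∘ (X ⊗ Y ⊗ δ)` of the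
weak bimonad `– ⊗ B` induced by a weak bimonoid `B`. -/
def tauW (W : WeakBimon M) (X Y : M) : (X ⊗ Y) ⊗ W.B ⟶ (X ⊗ W.B) ⊗ (Y ⊗ W.B) :=
  (𝟙 (X ⊗ Y) ⊗ₘ W.comul) ≫ (α_ X Y (W.B ⊗ W.B)).hom ≫ (𝟙 X ⊗ₘ (α_ Y W.B W.B).inv) ≫
    (𝟙 X ⊗ₘ ((β_ Y W.B).hom ⊗ₘ 𝟙 W.B)) ≫ (𝟙 X ⊗ₘ (α_ W.B Y W.B).hom) ≫
    (α_ X W.B (Y ⊗ W.B)).inv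

/-- The multiplication `m_X = X ⊗ μ` of the monad `– ⊗ B`. -/
def mW (W : WeakBimon M) (X : M) : (X ⊗ W.B) ⊗ W.B ⟶ X ⊗ W.B :=
  (α_ X W.B W.B).hom ≫ (𝟙 X ⊗ₘ W.mul)

/-- The unit `u_X = X ⊗ η` of the monad `– ⊗ B`. -/
def uW (W : WeakBimon M) (X : M) : X ⟶ X ⊗ W.B :=
  (ρ_ X).inv ≫ (𝟙 X ⊗ₘ W.one)

/-- Convolution product of endomorphisms of a weak bimonoid. -/
def convW (W : WeakBimon M) (f g : W.B ⟶ W.B) : W.B ⟶ W.B :=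
  W.comul ≫ (f ⊗ₘ g) ≫ W.mul

/-- The source map `r = (ε ⊗ B) ∘ (μ ⊗ B) ∘ (B ⊗ c) ∘ (δ ⊗ B) ∘ (η ⊗ B)`. -/
def rW (W : WeakBimon M) : W.B ⟶ W.B :=
  (λ_ W.B).inv ≫ (W.one ⊗ₘ 𝟙 W.B) ≫ (W.comul ⊗ₘ 𝟙 W.B) ≫ (α_ W.B W.B W.B).hom ≫
    (𝟙 W.B ⊗ₘ (β_ W.B W.B).hom) ≫ (α_ W.B W.B W.B).inv ≫ (W.mul ⊗ₘ 𝟙 W.B) ≫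
    (W.counit ⊗ₘ 𝟙 W.B) ≫ (λ_ W.B).hom

/-- The target map `t = (B ⊗ ε) ∘ (B ⊗ μ) ∘ (c ⊗ B) ∘ (B ⊗ δ) ∘ (B ⊗ η)`. -/
def tW (W : WeakBimon M) : W.B ⟶ W.B :=
  (ρ_ W.B).inv ≫ (𝟙 W.B ⊗ₘ W.one) ≫ (𝟙 W.B ⊗ₘ W.comul) ≫ (α_ W.B W.B W.B).inv ≫
    ((β_ W.B W.B).hom ⊗ₘ 𝟙 W.B) ≫ (α_ W.B W.B W.B).hom ≫ (𝟙 W.B ⊗ₘ W.mul) ≫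
    (𝟙 W.B ⊗ₘ W.counit) ≫ (ρ_ W.B).hom

/-- The map `s`, i.e. `(B ⊗ ε) ∘ (B ⊗ μ) ∘ (δ ⊗ B) ∘ (η ⊗ B)` (the `t`-map of `B^op`). -/
def sW (W : WeakBimon M) : W.B ⟶ W.B :=
  (λ_ W.B).inv ≫ (W.one ⊗ₘ 𝟙 W.B) ≫ (W.comul ⊗ₘ 𝟙 W.B) ≫ (α_ W.B W.B W.B).hom ≫
    (𝟙 W.B ⊗ₘ W.mul) ≫ (𝟙 W.B ⊗ₘ W.counit) ≫ (ρ_ W.B).hom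

/-- The map `r^op`, i.e. `(ε ⊗ B) ∘ (μ ⊗ B) ∘ (B ⊗ δ) ∘ (B ⊗ η)` (the `r`-map of `B^op`). -/
def ropW (W : WeakBimon M) : W.B ⟶ W.B :=
  (ρ_ W.B).inv ≫ (𝟙 W.B ⊗ₘ W.one) ≫ (𝟙 W.B ⊗ₘ W.comul) ≫ (α_ W.B W.B W.B).inv ≫
    (W.mul ⊗ₘ 𝟙 W.B) ≫ (W.counit ⊗ₘ 𝟙 W.B) ≫ (λ_ W.B).hom

/-- For a weak bimonoid `B`, the map `r` satisfies `r ∗ id_B = id_B`. -/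
theorem weakBimon_r_conv_id (W : WeakBimon M) :
    convW W (rW W) (𝟙 W.B) = 𝟙 W.B := by
  have key : W.comul ≫ (rW W ⊗ₘ 𝟙 W.B) ≫ W.mul =
      (λ_ W.B).inv ≫ (W.one ⊗ₘ 𝟙 W.B) ≫ W.mul ≫ W.comul ≫ (W.counit ⊗ₘ 𝟙 W.B) ≫
        (λ_ W.B).hom := by
    slice_rhs 3 4 => rw [W.compat]
    slice_rhs 3 3 => rw [show (W.comul ⊗ₘ W.comul) =
      (𝟙 W.B ⊗ₘ W.comul) ≫ (W.comul ⊗ₘ 𝟙 (W.B ⊗ W.B)) from (id_tensor_comp_tensor_id _ _).symm]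
    slice_rhs 2 3 => rw [tensor_id_comp_id_tensor, ← id_tensor_comp_tensor_id]
    slice_rhs 1 2 => rw [show (λ_ W.B).inv ≫ (𝟙 (𝟙_ M) ⊗ₘ W.comul) =
      W.comul ≫ (λ_ (W.B ⊗ W.B)).inv by simp]
    slice_rhs 10 10 => rw [show (W.mul ⊗ₘ W.mul) =
      (W.mul ⊗ₘ 𝟙 (W.B ⊗ W.B)) ≫ (𝟙 W.B ⊗ₘ W.mul) from (tensor_id_comp_id_tensor _ _).symm]
    slice_rhs 11 12 => rw [id_tensor_comp_tensor_id, ← tensor_id_comp_id_tensor]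
    slice_rhs 12 13 => rw [show (𝟙 (𝟙_ M) ⊗ₘ W.mul) ≫ (λ_ W.B).hom =
      (λ_ (W.B ⊗ W.B)).hom ≫ W.mul by simp]
    simp only [rW, comp_tensor_id, Category.assoc]
    monoidal
  rw [convW, key]
  slice_lhs 2 3 => rw [W.one_mul]
  slice_lhs 3 4 => rw [W.comul_counit_left]
  simp
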